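/- arXiv:1602.06008 — 2 statements merged into one kernel-verified Lean document; each statement's English description precedes it below -/
import Mathlib

section
/- Let a₁, …, aₙ > 0 and define P : ℂⁿ × ℂⁿ → ℂ by P(z, z') = (∏ᵢ aᵢ/(2π)) · exp(−(1/4) Σᵢ aᵢ(|zᵢ|² + |z'ᵢ|² − 2 zᵢ·conj(z'ᵢ))). Then P is the reproducing kernel of an orthogonal projection on L²(ℂⁿ, Lebesgue): (i) ∫_{ℂⁿ} P(z, w) P(w, z') dw = P(z, z') for all z, z' ∈ ℂⁿ; (ii) conj(P(z, z')) = P(z', z); (iii) P(z, z) = ∏ᵢ aᵢ/(2π) > 0 for all z. -/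
open MeasureTheory Complex

lemma norm_sq_cast (x y : ℝ) :
    ((‖(x : ℂ) + (y : ℂ) * I‖ : ℝ) : ℂ) ^ 2 = (x : ℂ) ^ 2 + (y : ℂ) ^ 2 := by
  rw [← Complex.ofReal_pow, Complex.sq_norm, Complex.normSq_add_mul_I]
  push_cast; ring

lemma oneDim (a : ℝ) (ha : 0 < a) (z z' : ℂ) :
    (∫ w : ℂ, (((a / (2 * Real.pi) : ℝ) : ℂ) *
        Complex.exp (-(1/4 : ℂ) * ((a : ℂ) *
          (((‖z‖ : ℝ) : ℂ) ^ 2 + ((‖w‖ : ℝ) : ℂ) ^ 2 - 2 * z * (starRingEnd ℂ) w))) *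
      (((a / (2 * Real.pi) : ℝ) : ℂ) *
        Complex.exp (-(1/4 : ℂ) * ((a : ℂ) *
          (((‖w‖ : ℝ) : ℂ) ^ 2 + ((‖z'‖ : ℝ) : ℂ) ^ 2 - 2 * w * (starRingEnd ℂ) z'))))))
    = ((a / (2 * Real.pi) : ℝ) : ℂ) *
        Complex.exp (-(1/4 : ℂ) * ((a : ℂ) *
          (((‖z‖ : ℝ) : ℂ) ^ 2 + ((‖z'‖ : ℝ) : ℂ) ^ 2 - 2 * z * (starRingEnd ℂ) z'))) := by
  have hA : (a : ℂ) ≠ 0 := by exact_mod_cast ha.ne'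
  have hπ : (Real.pi : ℂ) ≠ 0 := by exact_mod_cast Real.pi_ne_zero
  set c : ℂ := ((a / (2 * Real.pi) : ℝ) : ℂ) with hc_def
  set b : ℂ := -((a : ℂ) / 2) with hb_def
  set c₁ : ℂ := (a : ℂ) / 2 * (z + (starRingEnd ℂ) z') with hc1_def
  set c₂ : ℂ := (a : ℂ) / 2 * I * ((starRingEnd ℂ) z' - z) with hc2_def
  set d : ℂ := -(1/4 : ℂ) * ((a : ℂ) * (((‖z‖ : ℝ) : ℂ) ^ 2 + ((‖z'‖ : ℝ) : ℂ) ^ 2)) with hd_def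
  have hb : b.re < 0 := by
    simp [hb_def]
    positivity
  have hconj : ∀ x y : ℝ, (starRingEnd ℂ) ((x : ℂ) + (y : ℂ) * I) = (x : ℂ) - (y : ℂ) * I := by
    intro x y
    simp [map_add, map_mul, Complex.conj_ofReal, Complex.conj_I]
    ring
  -- move the integral to ℝ × ℝ
  rw [← (Complex.volume_preserving_equiv_real_prod.symm _).integral_comp']
  have key : ∀ p : ℝ × ℝ,
      (c * Complex.exp (-(1/4 : ℂ) * ((a : ℂ) *
          (((‖z‖ : ℝ) : ℂ) ^ 2 + ((‖(Complex.measurableEquivRealProd.symm p : ℂ)‖ : ℝ) : ℂ) ^ 2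
            - 2 * z * (starRingEnd ℂ) (Complex.measurableEquivRealProd.symm p)))) *
        (c * Complex.exp (-(1/4 : ℂ) * ((a : ℂ) *
          (((‖(Complex.measurableEquivRealProd.symm p : ℂ)‖ : ℝ) : ℂ) ^ 2 + ((‖z'‖ : ℝ) : ℂ) ^ 2
            - 2 * (Complex.measurableEquivRealProd.symm p) * (starRingEnd ℂ) z')))))
      = (c ^ 2 * Complex.exp (b * (p.1 : ℂ) ^ 2 + c₁ * (p.1 : ℂ) + d)) *
          Complex.exp (b * (p.2 : ℂ) ^ 2 + c₂ * (p.2 : ℂ)) := by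
    intro p
    have hw : (Complex.measurableEquivRealProd.symm p : ℂ) = (p.1 : ℂ) + (p.2 : ℂ) * I := by
      simp [Complex.measurableEquivRealProd_symm_apply, Complex.mk_eq_add_mul_I]
    rw [hw, norm_sq_cast, hconj]
    rw [mul_mul_mul_comm, ← Complex.exp_add, ← sq]
    conv_rhs => rw [mul_assoc, ← Complex.exp_add]
    congr 1
    simp only [hb_def, hc1_def, hc2_def, hd_def]
    ring
  simp_rw [key]
  rw [MeasureTheory.Measure.volume_eq_prod]
  rw [MeasureTheory.integral_prod_mul
    (fun t : ℝ => c ^ 2 * Complex.exp (b * (t : ℂ) ^ 2 + c₁ * (t : ℂ) + d))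
    (fun t : ℝ => Complex.exp (b * (t : ℂ) ^ 2 + c₂ * (t : ℂ)))]
  have h2 : (∫ y : ℝ, Complex.exp (b * (y : ℂ) ^ 2 + c₂ * (y : ℂ)))
      = ((Real.pi : ℂ) / -b) ^ (1/2 : ℂ) * Complex.exp (-(c₂ ^ 2 / (4 * b))) := by
    simpa using integral_cexp_quadratic hb c₂ 0
  rw [MeasureTheory.integral_const_mul, integral_cexp_quadratic hb c₁ d, h2]
  have hnb : -b = (a : ℂ) / 2 := by rw [hb_def, neg_neg]
  have hx : (Real.pi : ℂ) / -b ≠ 0 := by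
    rw [hnb]
    exact div_ne_zero hπ (div_ne_zero hA two_ne_zero)
  have hsqrt : ((Real.pi : ℂ) / -b) ^ (1/2 : ℂ) * ((Real.pi : ℂ) / -b) ^ (1/2 : ℂ)
      = (Real.pi : ℂ) / -b := by
    rw [← Complex.cpow_add _ _ hx]
    norm_num
  have hcc : c ^ 2 * ((Real.pi : ℂ) / -b) = c := by
    rw [hnb, hc_def]
    push_cast
    field_simp
  have hc2sq : c₂ ^ 2 = -(((a : ℂ) / 2) * ((starRingEnd ℂ) z' - z)) ^ 2 := by
    rw [hc2_def]
    linear_combination (((a : ℂ) / 2) * ((starRingEnd ℂ) z' - z)) ^ 2 * Complex.I_sq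
  have h4b : (4 : ℂ) * b ≠ 0 := by rw [hb_def]; simp [hA]
  have hdiv : (-(c₁ ^ 2) + ((a : ℂ) / 2 * ((starRingEnd ℂ) z' - z)) ^ 2) / (4 * b)
      = (a : ℂ) / 2 * (z * (starRingEnd ℂ) z') := by
    rw [div_eq_iff h4b, hc1_def, hb_def]; ring
  have hexp : d - c₁ ^ 2 / (4 * b) + (-(c₂ ^ 2 / (4 * b)))
      = -(1/4 : ℂ) * ((a : ℂ) *
          (((‖z‖ : ℝ) : ℂ) ^ 2 + ((‖z'‖ : ℝ) : ℂ) ^ 2 - 2 * z * (starRingEnd ℂ) z')) := by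
    rw [hc2sq, neg_div, neg_neg, sub_eq_add_neg, ← neg_div, add_assoc, ← add_div, hdiv,
      hd_def]
    ring
  calc c ^ 2 * (((Real.pi : ℂ) / -b) ^ (1/2 : ℂ) * Complex.exp (d - c₁ ^ 2 / (4 * b))) *
        (((Real.pi : ℂ) / -b) ^ (1/2 : ℂ) * Complex.exp (-(c₂ ^ 2 / (4 * b))))
      = c ^ 2 * (((Real.pi : ℂ) / -b) ^ (1/2 : ℂ) * ((Real.pi : ℂ) / -b) ^ (1/2 : ℂ)) *
        (Complex.exp (d - c₁ ^ 2 / (4 * b)) * Complex.exp (-(c₂ ^ 2 / (4 * b)))) := by ring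
    _ = c * Complex.exp (d - c₁ ^ 2 / (4 * b) + (-(c₂ ^ 2 / (4 * b)))) := by
        rw [hsqrt, hcc, ← Complex.exp_add]
    _ = _ := by rw [hexp]

/-- the model Bergman kernel on `ℂⁿ` is a self-reproducing, Hermitian
kernel with constant diagonal `∏ aᵢ/(2π)`. -/
theorem stmt_7 (n : ℕ) (a : Fin n → ℝ) (ha : ∀ i, 0 < a i)
    (P : (Fin n → ℂ) → (Fin n → ℂ) → ℂ)
    (hP : ∀ z z' : Fin n → ℂ, P z z' =
      ((∏ i, a i / (2 * Real.pi) : ℝ) : ℂ) *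
        Complex.exp (-(1 / 4 : ℂ) * ∑ i, (a i : ℂ) *
          (((‖z i‖ : ℝ) : ℂ) ^ 2 + ((‖z' i‖ : ℝ) : ℂ) ^ 2
            - 2 * z i * (starRingEnd ℂ) (z' i)))) :
    (∀ z z' : Fin n → ℂ, (∫ w : Fin n → ℂ, P z w * P w z') = P z z') ∧
    (∀ z z' : Fin n → ℂ, (starRingEnd ℂ) (P z z') = P z' z) ∧
    (∀ z : Fin n → ℂ, P z z = ((∏ i, a i / (2 * Real.pi) : ℝ) : ℂ)) ∧
    (0 < ∏ i, a i / (2 * Real.pi)) := by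
  have hexpand : ∀ u v : Fin n → ℂ, P u v =
      ∏ i, (((a i / (2 * Real.pi) : ℝ) : ℂ) *
        Complex.exp (-(1 / 4 : ℂ) * ((a i : ℂ) *
          (((‖u i‖ : ℝ) : ℂ) ^ 2 + ((‖v i‖ : ℝ) : ℂ) ^ 2
            - 2 * u i * (starRingEnd ℂ) (v i))))) := by
    intro u v
    rw [hP, Complex.ofReal_prod, Finset.mul_sum, Complex.exp_sum, ← Finset.prod_mul_distrib]
  refine ⟨?_, ?_, ?_, ?_⟩
  · intro z z'
    have : ∀ w : Fin n → ℂ, P z w * P w z' =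
        ∏ i, ((((a i / (2 * Real.pi) : ℝ) : ℂ) *
          Complex.exp (-(1 / 4 : ℂ) * ((a i : ℂ) *
            (((‖z i‖ : ℝ) : ℂ) ^ 2 + ((‖w i‖ : ℝ) : ℂ) ^ 2
              - 2 * z i * (starRingEnd ℂ) (w i))))) *
          (((a i / (2 * Real.pi) : ℝ) : ℂ) *
          Complex.exp (-(1 / 4 : ℂ) * ((a i : ℂ) *
            (((‖w i‖ : ℝ) : ℂ) ^ 2 + ((‖z' i‖ : ℝ) : ℂ) ^ 2
              - 2 * w i * (starRingEnd ℂ) (z' i)))))) := by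
      intro w
      rw [hexpand z w, hexpand w z', ← Finset.prod_mul_distrib]
    simp_rw [this]
    rw [MeasureTheory.volume_pi, MeasureTheory.integral_fintype_prod_eq_prod (ι := Fin n)
      (f := fun i (w : ℂ) => ((((a i / (2 * Real.pi) : ℝ) : ℂ) *
          Complex.exp (-(1 / 4 : ℂ) * ((a i : ℂ) *
            (((‖z i‖ : ℝ) : ℂ) ^ 2 + ((‖w‖ : ℝ) : ℂ) ^ 2
              - 2 * z i * (starRingEnd ℂ) w)))) *
          (((a i / (2 * Real.pi) : ℝ) : ℂ) *
          Complex.exp (-(1 / 4 : ℂ) * ((a i : ℂ) *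
            (((‖w‖ : ℝ) : ℂ) ^ 2 + ((‖z' i‖ : ℝ) : ℂ) ^ 2
              - 2 * w * (starRingEnd ℂ) (z' i)))))))]
    rw [hexpand z z']
    exact Finset.prod_congr rfl fun i _ => oneDim (a i) (ha i) (z i) (z' i)
  · intro z z'
    rw [hP z z', hP z' z, map_mul, ← Complex.exp_conj, Complex.conj_ofReal]
    have hsum : (starRingEnd ℂ) (-(1/4 : ℂ) * ∑ i, (a i : ℂ) *
        (((‖z i‖ : ℝ) : ℂ) ^ 2 + ((‖z' i‖ : ℝ) : ℂ) ^ 2 - 2 * z i * (starRingEnd ℂ) (z' i)))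
        = -(1/4 : ℂ) * ∑ i, (a i : ℂ) *
        (((‖z' i‖ : ℝ) : ℂ) ^ 2 + ((‖z i‖ : ℝ) : ℂ) ^ 2 - 2 * z' i * (starRingEnd ℂ) (z i)) := by
      rw [map_mul, map_sum]
      congr 1
      · rw [map_neg, map_div₀, map_one, map_ofNat]
      · refine Finset.sum_congr rfl fun i _ => ?_
        simp only [map_mul, map_sub, map_add, map_pow, Complex.conj_ofReal, Complex.conj_conj,
          map_ofNat]
        ring
    rw [hsum]
  · intro z
    rw [hP]
    have : ∀ i ∈ Finset.univ, ((a i : ℂ) *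
        (((‖z i‖ : ℝ) : ℂ) ^ 2 + ((‖z i‖ : ℝ) : ℂ) ^ 2
          - 2 * z i * (starRingEnd ℂ) (z i))) = 0 := by
      intro i _
      rw [mul_assoc, Complex.mul_conj]
      rw [Complex.normSq_eq_norm_sq]
      push_cast
      ring
    rw [Finset.sum_congr rfl this]
    simp
  · exact Finset.prod_pos fun i _ => div_pos (ha i) (by positivity)
end

section
/- Suppose nonnegative quantities satisfy the recursive inequality ‖s‖_{H^{m+1}} ≤ c(‖D s‖_{H^m} + p Σ_{k=0}^{m} ω_k ‖s‖_{H^{m−k}}) for all m ≤ M, where ω_k ≥ 1 are nondecreasing in k, p ≥ 1, and D is a linear operator. Then by induction there exists c' > 0 (depending only on c, M) such that ‖s‖_{H^{m+1}} ≤ c' Σ_{k=0}^{m+1} p^{m+1−k} ‖D^k s‖_{L²} ω_{m−k}^{m−k+1} for all m ≤ M, with the convention ω_{−1}^0 = 1. -/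
open Finset

private def coefB (p : ℝ) (ω : ℕ → ℝ) (m k : ℕ) : ℝ :=
  p ^ (m + 1 - k) * (if k = m + 1 then 1 else ω (m - k) ^ (m - k + 1))

private lemma coefB_nonneg {p : ℝ} {ω : ℕ → ℝ} (hp : 1 ≤ p) (hω : ∀ k, 1 ≤ ω k)
    (m k : ℕ) : 0 ≤ coefB p ω m k := by
  unfold coefB
  have h0 : (0:ℝ) ≤ p := le_trans zero_le_one hp
  have h1 : (0:ℝ) ≤ ω (m - k) := le_trans zero_le_one (hω _)
  positivity

private lemma coefB_shift (p : ℝ) (ω : ℕ → ℝ) (m k : ℕ) :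
    coefB p ω m k = coefB p ω (m + 1) (k + 1) := by
  unfold coefB
  have h1 : m + 1 + 1 - (k + 1) = m + 1 - k := by omega
  have h2 : k + 1 = m + 1 + 1 ↔ k = m + 1 := by omega
  have h3 : m + 1 - (k + 1) = m - k := by omega
  rw [h1, h3]
  simp [h2]

private lemma coefB_mul_le {p : ℝ} {ω : ℕ → ℝ} (hp : 1 ≤ p) (hω : ∀ k, 1 ≤ ω k)
    (hmono : Monotone ω) (n k j : ℕ) (hj : j ≤ n + 1) :
    p * ω k * coefB p ω n j ≤ coefB p ω (n + k + 1) j := by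
  have h0 : (0:ℝ) ≤ p := le_trans zero_le_one hp
  have hωnn : ∀ i, (0:ℝ) ≤ ω i := fun i => le_trans zero_le_one (hω i)
  have hne : j ≠ n + k + 1 + 1 := by omega
  unfold coefB
  rw [if_neg hne]
  by_cases hje : j = n + 1
  · subst hje
    rw [if_pos rfl]
    have e1 : n + 1 - (n + 1) = 0 := by omega
    have e2 : n + k + 1 + 1 - (n + 1) = k + 1 := by omega
    have e3 : n + k + 1 - (n + 1) = k := by omega
    rw [e1, e2, e3, pow_zero, mul_one, mul_one]
    have hpk : p ≤ p ^ (k + 1) := by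
      calc p = p ^ 1 := (pow_one p).symm
      _ ≤ p ^ (k + 1) := pow_le_pow_right₀ hp (by omega)
    have hωk : ω k ≤ ω k ^ (k + 1) := by
      calc ω k = ω k ^ 1 := (pow_one _).symm
      _ ≤ ω k ^ (k + 1) := pow_le_pow_right₀ (hω k) (by omega)
    exact mul_le_mul hpk hωk (hωnn k) (by positivity)
  · have hjn : j ≤ n := by omega
    rw [if_neg hje]
    have e2 : n + k + 1 + 1 - j = n + k + 2 - j := by omega
    have hpp : p ^ (n + 1 - j) * p ≤ p ^ (n + k + 2 - j) := by
      calc p ^ (n + 1 - j) * p = p ^ (n + 1 - j + 1) := by rw [pow_succ]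
      _ ≤ p ^ (n + k + 2 - j) := pow_le_pow_right₀ hp (by omega)
    have hωω : ω k * ω (n - j) ^ (n - j + 1) ≤ ω (n + k + 1 - j) ^ (n + k + 1 - j + 1) := by
      have h1 : ω k ≤ ω (n + k + 1 - j) := hmono (by omega)
      have h2 : ω (n - j) ^ (n - j + 1) ≤ ω (n + k + 1 - j) ^ (n - j + 1) :=
        pow_le_pow_left₀ (hωnn _) (hmono (by omega)) _
      calc ω k * ω (n - j) ^ (n - j + 1)
          ≤ ω (n + k + 1 - j) * ω (n + k + 1 - j) ^ (n - j + 1) :=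
            mul_le_mul h1 h2 (pow_nonneg (hωnn _) _) (hωnn _)
        _ = ω (n + k + 1 - j) ^ (n - j + 2) := by ring
        _ ≤ ω (n + k + 1 - j) ^ (n + k + 1 - j + 1) := pow_le_pow_right₀ (hω _) (by omega)
    calc p * ω k * (p ^ (n + 1 - j) * ω (n - j) ^ (n - j + 1))
        = (p ^ (n + 1 - j) * p) * (ω k * ω (n - j) ^ (n - j + 1)) := by ring
      _ ≤ p ^ (n + k + 2 - j) * ω (n + k + 1 - j) ^ (n + k + 1 - j + 1) :=
          mul_le_mul hpp hωω (mul_nonneg (hωnn k) (pow_nonneg (hωnn _) _)) (pow_nonneg h0 _)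
      _ = p ^ (n + k + 1 + 1 - j) * ω (n + k + 1 - j) ^ (n + k + 1 - j + 1) := by rw [e2]

/-- closed form of the elliptic bootstrap: from the recursive inequality
`N_{m+1}(s) ≤ c(N_m(Ds) + p Σ_{k≤m} ω_k N_{m−k}(s))` one deduces
`N_{m+1}(s) ≤ c' Σ_{k≤m+1} p^{m+1−k} ω_{m−k}^{m−k+1} N₀(Dᵏ s)`
(with the convention `ω_{−1}^0 = 1`), where `c'` depends only on `c` and `M`. -/
theorem stmt_15 (M : ℕ) (c : ℝ) (hc : 1 ≤ c) :
    ∃ c' > 0, ∀ (V : Type) (_ : AddCommGroup V) (_ : Module ℝ V),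
      ∀ (D : V →ₗ[ℝ] V) (N : ℕ → V → ℝ) (p : ℝ) (ω : ℕ → ℝ),
        1 ≤ p → (∀ k, 1 ≤ ω k) → Monotone ω →
        (∀ m (s : V), 0 ≤ N m s) →
        (∀ m ≤ M, ∀ s : V,
          N (m + 1) s ≤ c * (N m (D s) +
            p * ∑ k ∈ Finset.range (m + 1), ω k * N (m - k) s)) →
        ∀ m ≤ M, ∀ s : V,
          N (m + 1) s ≤ c' * ∑ k ∈ Finset.range (m + 2),
            p ^ (m + 1 - k) *
              (if k = m + 1 then 1 else ω (m - k) ^ (m - k + 1)) *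
              N 0 ((D ^ k) s) := by
  have hc0 : (0:ℝ) < c := lt_of_lt_of_le one_pos hc
  refine ⟨(c * (M + 2)) ^ (M + 1), by positivity, ?_⟩
  intro V _ _ D N p ω hp hω hmono hN hrec
  set q : ℝ := c * (M + 2) with hqdef
  have hq : 1 ≤ q := by
    calc (1:ℝ) = 1 * 1 := by ring
    _ ≤ c * (M + 2) := by
        apply mul_le_mul hc (by push_cast; linarith [Nat.cast_nonneg (α := ℝ) M]) zero_le_one hc0.le
  have hq0 : (0:ℝ) ≤ q := le_trans zero_le_one hq
  -- The closed-form bound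
  set B : ℕ → V → ℝ := fun m s => ∑ k ∈ Finset.range (m + 2), coefB p ω m k * N 0 ((D ^ k) s)
    with hBdef
  have hBnn : ∀ m s, 0 ≤ B m s := by
    intro m s
    apply Finset.sum_nonneg
    intro k _
    exact mul_nonneg (coefB_nonneg hp hω m k) (hN 0 _)
  have key : ∀ m, m ≤ M → ∀ s, N (m + 1) s ≤ q ^ (m + 1) * B m s := by
    intro m
    induction m using Nat.strong_induction_on with
    | _ m IH =>
      intro hm s
      -- bound on N m (D s)
      have hA : N m (D s) ≤ q ^ m * B m s := by
        match m with
        | 0 =>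
          rw [pow_zero, one_mul, hBdef]
          simp only [Finset.sum_range_succ, Finset.sum_range_zero, zero_add]
          have e1 : coefB p ω 0 1 = 1 := by unfold coefB; norm_num
          have e2 : (D ^ 1) s = D s := by rw [pow_one]
          rw [e1, e2, one_mul]
          have := mul_nonneg (coefB_nonneg hp hω 0 0) (hN 0 ((D ^ 0) s))
          linarith
        | n + 1 =>
          have h1 : N (n + 1) (D s) ≤ q ^ (n + 1) * B n (D s) := IH n (by omega) (by omega) (D s)
          have h2 : B n (D s) ≤ B (n + 1) s := by
            rw [hBdef]
            have hrw : ∀ k, coefB p ω n k * N 0 ((D ^ k) (D s)) =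
                coefB p ω (n + 1) (k + 1) * N 0 ((D ^ (k + 1)) s) := by
              intro k
              rw [← coefB_shift, pow_succ, Module.End.mul_apply]
            calc ∑ k ∈ Finset.range (n + 2), coefB p ω n k * N 0 ((D ^ k) (D s))
                = ∑ k ∈ Finset.range (n + 2), coefB p ω (n + 1) (k + 1) * N 0 ((D ^ (k + 1)) s) :=
                  Finset.sum_congr rfl (fun k _ => hrw k)
              _ ≤ ∑ k ∈ Finset.range (n + 1 + 2), coefB p ω (n + 1) k * N 0 ((D ^ k) s) := by
                  rw [Finset.sum_range_succ' (fun k => coefB p ω (n + 1) k * N 0 ((D ^ k) s)) (n + 2)]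
                  have := mul_nonneg (coefB_nonneg hp hω (n + 1) 0) (hN 0 ((D ^ 0) s))
                  linarith
          calc N (n + 1) (D s) ≤ q ^ (n + 1) * B n (D s) := h1
            _ ≤ q ^ (n + 1) * B (n + 1) s := by
                apply mul_le_mul_of_nonneg_left h2 (by positivity)
      -- bound on the sum terms
      have hS : ∀ k ∈ Finset.range (m + 1), p * (ω k * N (m - k) s) ≤ q ^ m * B m s := by
        intro k hk
        rw [Finset.mem_range] at hk
        have hq1 : (1:ℝ) ≤ q ^ m := one_le_pow₀ hq
        by_cases hkm : k = m
        · subst hkm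
          have e0 : k - k = 0 := by omega
          rw [e0]
          have hterm : p * ω k ≤ coefB p ω k 0 := by
            unfold coefB
            rw [if_neg (by omega)]
            have e1 : k + 1 - 0 = k + 1 := by omega
            have e2 : k - 0 = k := by omega
            rw [e1, e2]
            have hpk : p ≤ p ^ (k + 1) := by
              calc p = p ^ 1 := (pow_one p).symm
              _ ≤ p ^ (k + 1) := pow_le_pow_right₀ hp (by omega)
            have hωk : ω k ≤ ω k ^ (k + 1) := by
              calc ω k = ω k ^ 1 := (pow_one _).symm
              _ ≤ ω k ^ (k + 1) := pow_le_pow_right₀ (hω k) (by omega)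
            exact mul_le_mul hpk hωk (le_trans zero_le_one (hω k)) (by positivity)
          have hsingle : coefB p ω k 0 * N 0 s ≤ B k s := by
            rw [hBdef]
            have : coefB p ω k 0 * N 0 ((D ^ 0) s) ≤
                ∑ j ∈ Finset.range (k + 2), coefB p ω k j * N 0 ((D ^ j) s) := by
              apply Finset.single_le_sum (f := fun j => coefB p ω k j * N 0 ((D ^ j) s))
              · intro j _
                exact mul_nonneg (coefB_nonneg hp hω k j) (hN 0 _)
              · simp
            simpa using this
          calc p * (ω k * N 0 s) = (p * ω k) * N 0 s := by ring
            _ ≤ coefB p ω k 0 * N 0 s := mul_le_mul_of_nonneg_right hterm (hN 0 s)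
            _ ≤ B k s := hsingle
            _ ≤ q ^ k * B k s := le_mul_of_one_le_left (hBnn k s) hq1
        · -- k < m
          have hklt : k < m := by omega
          set n := m - k - 1 with hn
          have hmn : m = n + k + 1 := by omega
          have hIH : N (n + 1) s ≤ q ^ (n + 1) * B n s := IH n (by omega) (by omega) s
          have hmk : m - k = n + 1 := by omega
          rw [hmk]
          have hpB : p * ω k * B n s ≤ B m s := by
            rw [hBdef, Finset.mul_sum]
            calc ∑ j ∈ Finset.range (n + 2), p * ω k * (coefB p ω n j * N 0 ((D ^ j) s))
                ≤ ∑ j ∈ Finset.range (n + 2), coefB p ω m j * N 0 ((D ^ j) s) := by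
                  apply Finset.sum_le_sum
                  intro j hj
                  rw [Finset.mem_range] at hj
                  have := coefB_mul_le hp hω hmono n k j (by omega)
                  rw [hmn]
                  calc p * ω k * (coefB p ω n j * N 0 ((D ^ j) s))
                      = (p * ω k * coefB p ω n j) * N 0 ((D ^ j) s) := by ring
                    _ ≤ coefB p ω (n + k + 1) j * N 0 ((D ^ j) s) :=
                        mul_le_mul_of_nonneg_right this (hN 0 _)
              _ ≤ ∑ j ∈ Finset.range (m + 2), coefB p ω m j * N 0 ((D ^ j) s) := by
                  apply Finset.sum_le_sum_of_subset_of_nonneg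
                  · apply Finset.range_subset_range.mpr; omega
                  · intro j _ _
                    exact mul_nonneg (coefB_nonneg hp hω m j) (hN 0 _)
          have hqmono : q ^ (n + 1) ≤ q ^ m := pow_le_pow_right₀ hq (by omega)
          have hωknn : (0:ℝ) ≤ ω k := le_trans zero_le_one (hω k)
          have hp0 : (0:ℝ) ≤ p := le_trans zero_le_one hp
          calc p * (ω k * N (n + 1) s)
              ≤ p * (ω k * (q ^ (n + 1) * B n s)) := by
                apply mul_le_mul_of_nonneg_left _ hp0
                exact mul_le_mul_of_nonneg_left hIH hωknn
            _ = q ^ (n + 1) * (p * ω k * B n s) := by ring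
            _ ≤ q ^ (n + 1) * B m s := mul_le_mul_of_nonneg_left hpB (by positivity)
            _ ≤ q ^ m * B m s := mul_le_mul_of_nonneg_right hqmono (hBnn m s)
      -- combine
      have hsum : p * ∑ k ∈ Finset.range (m + 1), ω k * N (m - k) s
          ≤ (m + 1) * (q ^ m * B m s) := by
        rw [Finset.mul_sum]
        calc ∑ k ∈ Finset.range (m + 1), p * (ω k * N (m - k) s)
            ≤ ∑ k ∈ Finset.range (m + 1), q ^ m * B m s := Finset.sum_le_sum hS
          _ = (m + 1) * (q ^ m * B m s) := by
              rw [Finset.sum_const, Finset.card_range, nsmul_eq_mul]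
              push_cast; ring
      have hfinal : N (m + 1) s ≤ c * ((m + 2) * (q ^ m * B m s)) := by
        have := hrec m hm s
        calc N (m + 1) s ≤ c * (N m (D s) + p * ∑ k ∈ Finset.range (m + 1), ω k * N (m - k) s) :=
              this
          _ ≤ c * (q ^ m * B m s + (m + 1) * (q ^ m * B m s)) := by
              apply mul_le_mul_of_nonneg_left (add_le_add hA hsum) hc0.le
          _ = c * ((m + 2) * (q ^ m * B m s)) := by push_cast; ring
      have hcm : c * (m + 2) ≤ q := by
        rw [hqdef]
        apply mul_le_mul_of_nonneg_left _ hc0.le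
        push_cast
        have : (m:ℝ) ≤ (M:ℝ) := Nat.cast_le.mpr hm
        linarith
      calc N (m + 1) s ≤ c * ((m + 2) * (q ^ m * B m s)) := hfinal
        _ = (c * (m + 2)) * (q ^ m * B m s) := by ring
        _ ≤ q * (q ^ m * B m s) := by
            exact mul_le_mul_of_nonneg_right hcm (mul_nonneg (pow_nonneg hq0 m) (hBnn m s))
        _ = q ^ (m + 1) * B m s := by ring
  intro m hm s
  have h1 := key m hm s
  have h2 : q ^ (m + 1) * B m s ≤ q ^ (M + 1) * B m s :=
    mul_le_mul_of_nonneg_right (pow_le_pow_right₀ hq (by omega)) (hBnn m s)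
  have hBe : B m s = ∑ k ∈ Finset.range (m + 2),
      p ^ (m + 1 - k) * (if k = m + 1 then 1 else ω (m - k) ^ (m - k + 1)) * N 0 ((D ^ k) s) := by
    rw [hBdef]
    apply Finset.sum_congr rfl
    intro k _
    unfold coefB
    ring
  rw [← hBe]
  exact le_trans h1 h2
end
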